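/- Let p be a prime and f : ℤ_p → ℤ_p a continuous function. Then f is 1-Lipschitz if and only if for every integer n ≥ p one has ‖f(n) − f(n mod p^{⌊log_p n⌋})‖ ≤ p^{−⌊log_p n⌋}, i.e. p^{k(n)} divides the van der Put coefficient B^f_n in ℤ_p for every n ≥ 1. -/

import Mathlib

/-- The van der Put coefficients of `f : ℤ_p → ℤ_p`:
`B^f_n = f(n)` for `0 ≤ n < p` and `B^f_n = f(n) - f(n mod p^⌊log_p n⌋)` for `n ≥ p`. -/
noncomputable def vdpB (p : ℕ) [Fact p.Prime] (f : PadicInt p → PadicInt p) (n : ℕ) :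
    PadicInt p :=
  if n < p then f n else f n - f ((n % p ^ Nat.log p n : ℕ))


private lemma vdp_natCast_norm_le_pow {p : ℕ} [Fact p.Prime] {a b m : ℕ}
    (h : a ≡ b [MOD p ^ m]) : ‖(a : PadicInt p) - b‖ ≤ (p : ℝ) ^ (-(m : ℤ)) := by
  have hd : ((p : ℤ) ^ m) ∣ ((a : ℤ) - b) := by
    have := (Nat.modEq_iff_dvd.mp h)
    push_cast at this ⊢
    exact dvd_sub_comm.mp this
  have : ((a : PadicInt p) - b) = (((a : ℤ) - b : ℤ) : PadicInt p) := by push_cast; ring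
  rw [this]
  exact PadicInt.norm_int_le_pow_iff_dvd.mpr hd

private lemma vdp_modeq_of_norm_le {p : ℕ} [Fact p.Prime] {a b m : ℕ}
    (h : ‖(a : PadicInt p) - b‖ ≤ (p : ℝ) ^ (-(m : ℤ))) : a ≡ b [MOD p ^ m] := by
  have : ((a : PadicInt p) - b) = (((a : ℤ) - b : ℤ) : PadicInt p) := by push_cast; ring
  rw [this] at h
  have hd := PadicInt.norm_int_le_pow_iff_dvd.mp h
  rw [Nat.modEq_iff_dvd]
  push_cast
  exact dvd_sub_comm.mp hd

/-- Key: norm condition on coefficients implies Lipschitz on naturals. -/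
private lemma vdp_key {p : ℕ} [Fact p.Prime] (f : PadicInt p → PadicInt p)
    (H : ∀ n : ℕ, p ≤ n →
      ‖f n - f ((n % p ^ Nat.log p n : ℕ))‖ ≤ (p : ℝ) ^ (-(Nat.log p n : ℤ)))
    (m : ℕ) : ∀ a : ℕ, ∀ b ≤ a, a ≡ b [MOD p ^ m] →
      ‖f a - f b‖ ≤ (p : ℝ) ^ (-(m : ℤ)) := by
  have hp : 1 < p := (Fact.out : p.Prime).one_lt
  have hp1 : (1 : ℝ) ≤ p := by exact_mod_cast hp.le
  rcases Nat.eq_zero_or_pos m with rfl | hm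
  · intro a b _ _
    simpa using (PadicInt.norm_le_one _ : ‖f a - f b‖ ≤ 1)
  intro a
  induction a using Nat.strong_induction_on with
  | _ a ih =>
    intro b hba hab
    rcases eq_or_lt_of_le hba with rfl | hlt
    · simp [zpow_nonneg (by positivity : (0:ℝ) ≤ (p:ℝ))]
    -- a > b, so p^m ≤ a
    have hpm : p ^ m ≤ a := by
      have : (p : ℤ) ^ m ∣ (a : ℤ) - b := by
        have := Nat.modEq_iff_dvd.mp hab; push_cast at this ⊢; exact dvd_sub_comm.mp this
      have hpos : (0 : ℤ) < (a : ℤ) - b := by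
        have : (b : ℤ) < a := by exact_mod_cast hlt
        omega
      have h2 := Int.le_of_dvd hpos this
      have h3 : (p : ℤ) ^ m ≤ (a : ℤ) := le_trans h2 (by omega)
      exact_mod_cast h3
    have ha0 : a ≠ 0 := by
      have : 1 ≤ p ^ m := Nat.one_le_pow _ _ (by omega)
      omega
    set k := Nat.log p a with hk
    have hmk : m ≤ k := (Nat.le_log_iff_pow_le hp ha0).mpr hpm
    have hpa : p ≤ a := le_trans (by simpa using Nat.pow_le_pow_right hp.le hm) hpm
    set a' := a % p ^ k with ha'
    have ha'lt : a' < a := lt_of_lt_of_le (Nat.mod_lt _ (Nat.pow_pos (by omega)))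
      (Nat.pow_log_le_self p ha0)
    have haa' : a ≡ a' [MOD p ^ m] :=
      ((Nat.mod_modEq a (p ^ k)).of_dvd (pow_dvd_pow p hmk)).symm
    have ha'b : a' ≡ b [MOD p ^ m] := haa'.symm.trans hab
    have h1 : ‖f a - f a'‖ ≤ (p : ℝ) ^ (-(m : ℤ)) := by
      refine le_trans (H a hpa) ?_
      apply zpow_le_zpow_right₀ hp1
      omega
    have h2 : ‖f a' - f b‖ ≤ (p : ℝ) ^ (-(m : ℤ)) := by
      rcases le_total b a' with hb | hb
      · exact ih a' ha'lt b hb ha'b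
      · rw [norm_sub_rev]
        exact ih b (lt_of_le_of_lt (le_refl b) hlt) a' hb ha'b.symm
    calc ‖f a - f b‖ = ‖(f a - f a') + (f a' - f b)‖ := by ring_nf
      _ ≤ max ‖f a - f a'‖ ‖f a' - f b‖ := PadicInt.nonarchimedean _ _
      _ ≤ (p : ℝ) ^ (-(m : ℤ)) := max_le h1 h2

/-- A continuous `f : ℤ_p → ℤ_p` is 1-Lipschitz iff
`‖f(n) - f(n mod p^⌊log_p n⌋)‖ ≤ p^{-⌊log_p n⌋}` for every `n ≥ p`, i.e. iff
`p^{k(n)}` divides the van der Put coefficient `B^f_n` in `ℤ_p` for every `n ≥ 1`. -/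
theorem oneLipschitz_iff_vanDerPut (p : ℕ) [Fact p.Prime]
    (f : PadicInt p → PadicInt p) (hf : Continuous f) :
    ((∀ x y : PadicInt p, ‖f x - f y‖ ≤ ‖x - y‖) ↔
      (∀ n : ℕ, p ≤ n →
        ‖f n - f ((n % p ^ Nat.log p n : ℕ))‖ ≤ (p : ℝ) ^ (-(Nat.log p n : ℤ)))) ∧
    ((∀ x y : PadicInt p, ‖f x - f y‖ ≤ ‖x - y‖) ↔
      (∀ n : ℕ, 1 ≤ n → (p : PadicInt p) ^ Nat.log p n ∣ vdpB p f n)) := by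
  have hp : 1 < p := (Fact.out : p.Prime).one_lt
  have main : (∀ x y : PadicInt p, ‖f x - f y‖ ≤ ‖x - y‖) ↔
      (∀ n : ℕ, p ≤ n →
        ‖f n - f ((n % p ^ Nat.log p n : ℕ))‖ ≤ (p : ℝ) ^ (-(Nat.log p n : ℤ))) := by
    constructor
    · intro hL n hn
      set k := Nat.log p n
      refine le_trans (hL _ _) ?_
      exact vdp_natCast_norm_le_pow (Nat.mod_modEq n (p ^ k)).symm
    · intro H x y
      rcases eq_or_ne x y with rfl | hxy
      · simp
      have hne : x - y ≠ 0 := sub_ne_zero.mpr hxy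
      obtain ⟨m, hm⟩ : ∃ m : ℕ, ‖x - y‖ = (p : ℝ) ^ (-(m : ℤ)) := by
        refine ⟨(x - y).valuation, ?_⟩
        rw [PadicInt.norm_eq_zpow_neg_valuation hne]
      rw [hm]
      have hpow : (0 : ℝ) < (p : ℝ) ^ (-(m : ℤ)) := by positivity
      obtain ⟨δ₁, hδ₁, hc₁⟩ := Metric.continuous_iff.mp hf x _ hpow
      obtain ⟨δ₂, hδ₂, hc₂⟩ := Metric.continuous_iff.mp hf y _ hpow
      obtain ⟨a, ha⟩ := PadicInt.denseRange_natCast.exists_dist_lt x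
        (lt_min hδ₁ hpow : (0:ℝ) < min δ₁ ((p:ℝ) ^ (-(m:ℤ))))
      obtain ⟨b, hb⟩ := PadicInt.denseRange_natCast.exists_dist_lt y
        (lt_min hδ₂ hpow : (0:ℝ) < min δ₂ ((p:ℝ) ^ (-(m:ℤ))))
      have hxa : ‖x - (a : PadicInt p)‖ ≤ (p : ℝ) ^ (-(m : ℤ)) :=
        le_of_lt (lt_of_lt_of_le (by simpa [dist_eq_norm] using ha) (min_le_right _ _))
      have hyb : ‖y - (b : PadicInt p)‖ ≤ (p : ℝ) ^ (-(m : ℤ)) :=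
        le_of_lt (lt_of_lt_of_le (by simpa [dist_eq_norm] using hb) (min_le_right _ _))
      have hab : (a : ℕ) ≡ b [MOD p ^ m] := by
        apply vdp_modeq_of_norm_le
        calc ‖(a : PadicInt p) - b‖
            = ‖((a : PadicInt p) - x) + ((x - y) + (y - (b : PadicInt p)))‖ := by ring_nf
          _ ≤ max ‖(a : PadicInt p) - x‖ ‖(x - y) + (y - (b : PadicInt p))‖ :=
              PadicInt.nonarchimedean _ _
          _ ≤ max ‖(a : PadicInt p) - x‖ (max ‖x - y‖ ‖y - (b : PadicInt p)‖) := by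
              exact max_le_max le_rfl (PadicInt.nonarchimedean _ _)
          _ ≤ (p : ℝ) ^ (-(m : ℤ)) := by
              rw [norm_sub_rev]
              exact max_le hxa (max_le hm.le hyb)
      have hfab : ‖f a - f b‖ ≤ (p : ℝ) ^ (-(m : ℤ)) := by
        rcases le_total (b : ℕ) a with hba | hba
        · exact vdp_key f H m a b hba hab
        · rw [norm_sub_rev]; exact vdp_key f H m b a hba hab.symm
      have hfa : ‖f x - f a‖ ≤ (p : ℝ) ^ (-(m : ℤ)) := by
        have := hc₁ a (lt_of_lt_of_le (by simpa [dist_comm] using ha) (min_le_left _ _))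
        rw [dist_eq_norm] at this
        rw [norm_sub_rev]
        exact this.le
      have hfb : ‖f b - f y‖ ≤ (p : ℝ) ^ (-(m : ℤ)) := by
        have := hc₂ b (lt_of_lt_of_le (by simpa [dist_comm] using hb) (min_le_left _ _))
        rw [dist_eq_norm] at this
        exact this.le
      calc ‖f x - f y‖ = ‖(f x - f a) + ((f a - f b) + (f b - f y))‖ := by ring_nf
        _ ≤ max ‖f x - f a‖ ‖(f a - f b) + (f b - f y)‖ := PadicInt.nonarchimedean _ _
        _ ≤ max ‖f x - f a‖ (max ‖f a - f b‖ ‖f b - f y‖) :=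
            max_le_max le_rfl (PadicInt.nonarchimedean _ _)
        _ ≤ (p : ℝ) ^ (-(m : ℤ)) := max_le hfa (max_le hfab hfb)
  refine ⟨main, main.trans ?_⟩
  constructor
  · intro H n hn
    rcases lt_or_ge n p with h | h
    · have : Nat.log p n = 0 := Nat.log_eq_zero_iff.mpr (Or.inl h)
      simp [this]
    · rw [vdpB, if_neg (not_lt.mpr h)]
      rw [← Ideal.mem_span_singleton, ← PadicInt.norm_le_pow_iff_mem_span_pow]
      exact H n h
  · intro H n hn
    have h1 : 1 ≤ n := le_trans (by omega) hn
    have := H n h1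
    rw [vdpB, if_neg (not_lt.mpr hn)] at this
    rw [← Ideal.mem_span_singleton, ← PadicInt.norm_le_pow_iff_mem_span_pow] at this
    exact this
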